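/- For the global minimizer of the BDPO loss over policies: if π* minimizes L_BDPO, then the DPO margin β·log(π*(y_w)/π*(y_l)) equals +∞ (in the extended reals), i.e., π*(y_l) = 0 while π*(y_w) > 0. -/

import Mathlib

/-- If π* minimizes the BDPO loss (equivalently, maximizes the objective
π(y_w)/(λπ(y_l)+(1-λ)π_ref(y_l))), then the DPO margin β·log(π*(y_w)/π*(y_l)) is +∞,
i.e., π*(y_l) = 0 while π*(y_w) > 0. -/
theorem bdpo_minimizer_infinite_margin {Y : Type*} [Fintype Y] (yw yl : Y) (hne : yw ≠ yl)
    (πref : Y → ℝ) (hrefnn : ∀ y, 0 ≤ πref y) (hrefsum : ∑ y, πref y = 1)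
    (hrefl : 0 < πref yl) (hrefw : 0 < πref yw)
    (lam β : ℝ) (hlam : lam ∈ Set.Ioo (0 : ℝ) 1) (hβ : 0 < β)
    (π : Y → ℝ) (hnn : ∀ y, 0 ≤ π y) (hsum : ∑ y, π y = 1)
    (hmax : ∀ π' : Y → ℝ, (∀ y, 0 ≤ π' y) → (∑ y, π' y) = 1 →
      π' yw / (lam * π' yl + (1 - lam) * πref yl) ≤
      π yw / (lam * π yl + (1 - lam) * πref yl)) :
    π yl = 0 ∧ 0 < π yw := by
  classical
  obtain ⟨hl0, hl1⟩ := hlam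
  have hne' : yl ≠ yw := Ne.symm hne
  have hdpos : 0 < (1 - lam) * πref yl := mul_pos (by linarith) hrefl
  have hDpos : 0 < lam * π yl + (1 - lam) * πref yl := by
    have := mul_nonneg hl0.le (hnn yl); linarith
  have hw : 0 < π yw := by
    have h1 := hmax (fun y => if y = yw then 1 else 0)
      (fun y => by split <;> norm_num) (by simp)
    simp only [if_pos rfl, if_neg hne'] at h1
    have h2 : (0:ℝ) < 1 / (lam * 0 + (1 - lam) * πref yl) := by positivity
    have h3 := lt_of_lt_of_le h2 h1
    rcases div_pos_iff.mp h3 with ⟨h, _⟩ | ⟨_, h⟩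
    · exact h
    · linarith
  refine ⟨?_, hw⟩
  by_contra hl
  have hl : 0 < π yl := lt_of_le_of_ne (hnn yl) (Ne.symm hl)
  set π' : Y → ℝ := fun y => π y + (if y = yw then π yl else 0) - (if y = yl then π yl else 0)
    with hπ'
  have hnn' : ∀ y, 0 ≤ π' y := by
    intro y
    simp only [hπ']
    split <;> split <;> rename_i h1 h2
    · exact absurd (h2.symm.trans h1) hne'
    · linarith [hnn y, hnn yl]
    · rw [h2]; linarith
    · linarith [hnn y]
  have hsum' : (∑ y, π' y) = 1 := by
    simp only [hπ']
    rw [Finset.sum_sub_distrib, Finset.sum_add_distrib]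
    simp [Finset.sum_ite_eq', hsum]
  have h2 := hmax π' hnn' hsum'
  have hw' : π' yw = π yw + π yl := by simp [hπ', hne, hne']
  have hl' : π' yl = 0 := by simp [hπ', hne, hne']
  rw [hw', hl'] at h2
  rw [div_le_div_iff₀ (by linarith) hDpos] at h2
  nlinarith [mul_pos hl hdpos, mul_nonneg (mul_nonneg hl0.le (hnn yl)) (hnn yw),
    mul_nonneg (mul_nonneg hl0.le (hnn yl)) hl.le]
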